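/- Let x : ℝ → ℝ^n solve dx/dt = F(x), let ξ̂ : ℝ → ℝ^v solve dξ̂/dt = A ξ̂ + B H(x(t)), and let ẑ(t) = C ξ̂(t) + D H(x(t)) and z(t) = q(x(t)). If the C¹ map T : ℝ^n → ℝ^v satisfies DT(x) F(x) = A T(x) + B H(x) and q(x) = C T(x) + D H(x) for all x ∈ ℝ^n, then ẑ(t) − z(t) = C exp(tA) (ξ̂(0) − T(x(0))) for all t ≥ 0. -/

import Mathlib

set_option maxHeartbeats 1000000

open Matrix

attribute [local instance] Matrix.linftyOpNormedRing Matrix.linftyOpNormedAlgebra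

/-- Derivative of `t ↦ (M t).mulVec (w t)` (product rule). -/
lemma hasDerivAt_mulVec {v : ℕ} {M : ℝ → Matrix (Fin v) (Fin v) ℝ}
    {M' : Matrix (Fin v) (Fin v) ℝ} {w : ℝ → (Fin v → ℝ)} {w' : Fin v → ℝ} {t : ℝ}
    (hM : ∀ i j, HasDerivAt (fun s => M s i j) (M' i j) t)
    (hw : HasDerivAt w w' t) :
    HasDerivAt (fun s => (M s).mulVec (w s))
      (M'.mulVec (w t) + (M t).mulVec w') t := by
  rw [hasDerivAt_pi] at hw ⊢
  intro i
  have : ∀ s, (M s).mulVec (w s) i = ∑ j, M s i j * w s j := fun s => rfl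
  simp only [this]
  have h : HasDerivAt (fun s => ∑ j, M s i j * w s j)
      (∑ j, (M' i j * w t j + M t i j * w' j)) t :=
    HasDerivAt.fun_sum fun j _ => (hM i j).mul (hw j)
  refine h.congr_deriv ?_
  simp [Matrix.mulVec, dotProduct, Finset.sum_add_distrib]

theorem stmt1
    {n v p : ℕ}
    (F : (Fin n → ℝ) → (Fin n → ℝ)) (H : (Fin n → ℝ) → (Fin p → ℝ))
    (q : (Fin n → ℝ) → ℝ)
    (A : Matrix (Fin v) (Fin v) ℝ) (B : Matrix (Fin v) (Fin p) ℝ)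
    (C : Fin v → ℝ) (D : Fin p → ℝ)
    (T : (Fin n → ℝ) → (Fin v → ℝ)) (hT : ContDiff ℝ 1 T)
    (hPDE : ∀ x : Fin n → ℝ, fderiv ℝ T x (F x) = A.mulVec (T x) + B.mulVec (H x))
    (hOut : ∀ x : Fin n → ℝ, q x = C ⬝ᵥ T x + D ⬝ᵥ H x)
    (x : ℝ → (Fin n → ℝ)) (hx : ∀ t : ℝ, HasDerivAt x (F (x t)) t)
    (ξ : ℝ → (Fin v → ℝ))
    (hξ : ∀ t : ℝ, HasDerivAt ξ (A.mulVec (ξ t) + B.mulVec (H (x t))) t) :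
    ∀ t : ℝ, 0 ≤ t →
      (C ⬝ᵥ ξ t + D ⬝ᵥ H (x t)) - q (x t)
        = C ⬝ᵥ (NormedSpace.exp (t • A)).mulVec (ξ 0 - T (x 0)) := by
  -- the error e(t) = ξ t - T (x t)
  set e : ℝ → (Fin v → ℝ) := fun t => ξ t - T (x t) with he
  -- e'(t) = A e(t)
  have hTd : Differentiable ℝ T := hT.differentiable one_ne_zero
  have he' : ∀ t, HasDerivAt e (A.mulVec (e t)) t := by
    intro t
    have hTx : HasDerivAt (fun s => T (x s)) (fderiv ℝ T (x t) (F (x t))) t :=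
      (hTd (x t)).hasFDerivAt.comp_hasDerivAt t (hx t)
    rw [hPDE] at hTx
    have := (hξ t).sub hTx
    refine HasDerivAt.congr_deriv (f := e) this ?_
    simp [he, Matrix.mulVec_sub]
  -- u(t) = exp(-t•A).mulVec (e t) is constant
  set u : ℝ → (Fin v → ℝ) := fun t => (NormedSpace.exp ((-t) • A)).mulVec (e t) with hu
  have hexp : ∀ t i j, HasDerivAt (fun s : ℝ => NormedSpace.exp ((-s) • A) i j)
      ((-(A * NormedSpace.exp ((-t) • A))) i j) t := by
    intro t i j
    have h1 : HasDerivAt (fun s : ℝ => NormedSpace.exp (s • A))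
        (A * NormedSpace.exp ((-t) • A)) (-t) := hasDerivAt_exp_smul_const' A (-t)
    have h2 : HasDerivAt (fun s : ℝ => NormedSpace.exp ((-s) • A))
        (-(A * NormedSpace.exp ((-t) • A))) t := by
      have := h1.scomp t (hasDerivAt_neg t)
      simp only [Function.comp_def, one_smul, neg_smul] at this ⊢
      exact this
    let g : Matrix (Fin v) (Fin v) ℝ →ₗ[ℝ] ℝ :=
      { toFun := fun M => M i j, map_add' := fun _ _ => rfl, map_smul' := fun _ _ => rfl }
    exact (LinearMap.toContinuousLinearMap g).hasFDerivAt.comp_hasDerivAt t h2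
  have hu' : ∀ t, HasDerivAt u 0 t := by
    intro t
    have h := hasDerivAt_mulVec (hexp t) (he' t)
    convert h using 1
    have hcomm : NormedSpace.exp ((-t) • A) * A = A * NormedSpace.exp ((-t) • A) :=
      (((Commute.refl A).smul_left (-t)).exp_left).eq
    rw [Matrix.mulVec_mulVec, hcomm, Matrix.neg_mulVec, neg_add_cancel]
  have huc : ∀ t, u t = u 0 := by
    intro t
    exact is_const_of_deriv_eq_zero (fun s => (hu' s).differentiableAt)
      (fun s => (hu' s).deriv) t 0
  -- exp(t•A) * exp(-t•A) = 1
  have hinv : ∀ t : ℝ, NormedSpace.exp (t • A) * NormedSpace.exp ((-t) • A) = 1 := by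
    intro t
    rw [← Matrix.exp_add_of_commute _ _ (((Commute.refl A).smul_left t).smul_right (-t))]
    simp [← add_smul]
  intro t _
  have he0 : u 0 = e 0 := by simp [hu]
  have key : e t = (NormedSpace.exp (t • A)).mulVec (e 0) := by
    have : (NormedSpace.exp (t • A)).mulVec (u t) = e t := by
      rw [hu, Matrix.mulVec_mulVec, hinv, Matrix.one_mulVec]
    rw [← this, huc, he0]
  have hz : (C ⬝ᵥ ξ t + D ⬝ᵥ H (x t)) - q (x t) = C ⬝ᵥ e t := by
    rw [hOut, he]
    simp [dotProduct_sub]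
  rw [hz, key]
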